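/- Fix N ≥ 1 and k > 0, and let G : ℝ^N → ℝ^N be differentiable with each component G_i convex. Let (M, U) : [0, T) → ℝ^N × ℝ^N be a differentiable solution of the discrete Hessian Riemannian flow with all m_j(t) > 0 and (1/N)Σ_{j=1}^N m_j(t) = 1 for all t ∈ [0, T). Let (M*, U*) ∈ ℝ^N × ℝ^N satisfy F̃(M*, U*) = 0 with all m*_j > 0 and (1/N)Σ_{j=1}^N m*_j = 1. Then the function φ̄(t) = (1/N)Σ_{j=1}^N m*_j ln(m*_j / m_j(t)) + (1/(2N))Σ_{j=1}^N (u_j(t) − u*_j)² is nonnegative and nonincreasing on [0, T). -/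

import Mathlib

set_option maxHeartbeats 1000000


/-- The discrete entropy-penalized effective Hamiltonian
`H̃(M,U) = (∑ᵢ (mᵢ Gᵢ(U) − (1/k) mᵢ ln mᵢ)) / (∑ᵢ mᵢ)`. -/
noncomputable def Htilde {N : ℕ} (k : ℝ) (G : (Fin N → ℝ) → (Fin N → ℝ))
    (M U : Fin N → ℝ) : ℝ :=
  (∑ i, (M i * G U i - (1 / k) * (M i * Real.log (M i)))) / ∑ i, M i

/-- First block of `F̃(M,U)`: `(−Gᵢ(U) + H̃(M,U) + (1/k) ln mᵢ)ᵢ`. -/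
noncomputable def Ftilde1 {N : ℕ} (k : ℝ) (G : (Fin N → ℝ) → (Fin N → ℝ))
    (M U : Fin N → ℝ) (i : Fin N) : ℝ :=
  -(G U i) + Htilde k G M U + (1 / k) * Real.log (M i)

/-- Second block of `F̃(M,U)` (and of `F̄(M,U)`): the vector `DG(U)ᵀ M`. -/
noncomputable def Ftilde2 {N : ℕ} (G : (Fin N → ℝ) → (Fin N → ℝ))
    (M U : Fin N → ℝ) (j : Fin N) : ℝ :=
  ∑ i, M i * (fderiv ℝ G U) (Pi.single j 1) i

/-- First block of `F̄(M,U)`: `(mᵢ(−Gᵢ(U) + H̃(M,U) + (1/k) ln mᵢ))ᵢ`. -/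
noncomputable def Fbar1 {N : ℕ} (k : ℝ) (G : (Fin N → ℝ) → (Fin N → ℝ))
    (M U : Fin N → ℝ) (i : Fin N) : ℝ :=
  M i * Ftilde1 k G M U i

lemma grad_ineq {E : Type*} [NormedAddCommGroup E] [NormedSpace ℝ E]
    {f : E → ℝ} {f' : E →L[ℝ] ℝ} (hconv : ConvexOn ℝ Set.univ f)
    (x y : E) (hf : HasFDerivAt f f' x) : f x + f' (y - x) ≤ f y := by
  have hline : ∀ t : ℝ, (AffineMap.lineMap x y : ℝ →ᵃ[ℝ] E) t = x + t • (y - x) := by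
    intro t; simp [AffineMap.lineMap_apply]; module
  have hg : ConvexOn ℝ Set.univ (f ∘ (AffineMap.lineMap x y : ℝ →ᵃ[ℝ] E)) := by
    simpa using hconv.comp_affineMap (AffineMap.lineMap x y : ℝ →ᵃ[ℝ] E)
  have hlin : HasDerivAt (fun t : ℝ => (AffineMap.lineMap x y : ℝ →ᵃ[ℝ] E) t) (y - x) 0 := by
    simp_rw [hline]
    simpa using ((hasDerivAt_id (0:ℝ)).smul_const (y - x)).const_add x
  have hf0 : HasFDerivAt f f' ((AffineMap.lineMap x y : ℝ →ᵃ[ℝ] E) 0) := by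
    simpa [hline] using hf
  have hgd : HasDerivAt (f ∘ (AffineMap.lineMap x y : ℝ →ᵃ[ℝ] E)) (f' (y - x)) 0 :=
    hf0.comp_hasDerivAt 0 hlin
  have := hg.le_slope_of_hasDerivAt (Set.mem_univ 0) (Set.mem_univ 1) one_pos hgd
  rw [slope_def_field] at this
  simp [hline] at this
  rw [map_sub]
  linarith

lemma fderiv_expand {N : ℕ} (G : (Fin N → ℝ) → (Fin N → ℝ)) (x w : Fin N → ℝ) (i : Fin N) :
    (fderiv ℝ G x) w i = ∑ j, w j * (fderiv ℝ G x) (Pi.single j 1) i := by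
  have hw : w = ∑ j, w j • (Pi.single j 1 : Fin N → ℝ) := by
    funext l
    rw [Finset.sum_apply]
    simp [Pi.single_apply, Finset.sum_ite_eq']
  conv_lhs => rw [hw]
  rw [map_sum]
  simp_rw [map_smul]
  rw [Finset.sum_apply]
  simp [smul_eq_mul]

lemma comp_hasFDerivAt {N : ℕ} {G : (Fin N → ℝ) → (Fin N → ℝ)} (hGdiff : Differentiable ℝ G)
    (x : Fin N → ℝ) (i : Fin N) :
    HasFDerivAt (fun U => G U i)
      ((ContinuousLinearMap.proj i).comp (fderiv ℝ G x)) x :=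
  (ContinuousLinearMap.proj i : ((Fin N → ℝ) →L[ℝ] ℝ)).hasFDerivAt.comp x (hGdiff x).hasFDerivAt

/-- swap lemma -/
lemma swap_sum {N : ℕ} (G : (Fin N → ℝ) → (Fin N → ℝ)) (m' x u v : Fin N → ℝ) :
    ∑ j, (u j - v j) * Ftilde2 G m' x j = ∑ i, m' i * ((fderiv ℝ G x) (u - v) i) := by
  simp only [Ftilde2, Finset.mul_sum]
  rw [Finset.sum_comm]
  apply Finset.sum_congr rfl
  intro i _
  rw [fderiv_expand G x (u - v) i, Finset.mul_sum]
  apply Finset.sum_congr rfl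
  intro j _
  simp only [Pi.sub_apply]
  ring

lemma key_ineq {N : ℕ} (hN : 1 ≤ N) {k : ℝ} (hk : 0 < k)
    (G : (Fin N → ℝ) → (Fin N → ℝ)) (hGdiff : Differentiable ℝ G)
    (hGconv : ∀ i : Fin N, ConvexOn ℝ Set.univ (fun U => G U i))
    (m u μ v : Fin N → ℝ)
    (hm : ∀ i, 0 < m i) (hμ : ∀ i, 0 < μ i)
    (hmsum : ∑ i, m i = N) (hμsum : ∑ i, μ i = N)
    (hstar1 : ∀ i, Ftilde1 k G μ v i = 0)
    (hstar2 : ∀ j, Ftilde2 G μ v j = 0) :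
    ∑ j, μ j * Ftilde1 k G m u j - ∑ j, (u j - v j) * Ftilde2 G m u j ≤ 0 := by
  have hNpos : (0:ℝ) < N := by exact_mod_cast hN
  set a1 := ∑ j, μ j * G u j with ha1
  set a2 := ∑ j, m j * G u j with ha2
  set b1 := ∑ j, μ j * G v j with hb1
  set b2 := ∑ j, m j * G v j with hb2
  set l1 := ∑ j, m j * Real.log (m j) with hl1
  set l2 := ∑ j, μ j * Real.log (m j) with hl2
  set l3 := ∑ j, m j * Real.log (μ j) with hl3
  set l4 := ∑ j, μ j * Real.log (μ j) with hl4
  -- E2 : N * Htilde = a2 - (1/k) l1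
  have E2 : (N:ℝ) * Htilde k G m u = a2 - (1/k) * l1 := by
    rw [Htilde, hmsum, ha2, hl1, Finset.sum_sub_distrib, ← Finset.mul_sum]
    field_simp
  -- E1 : sum μ Ftilde1 = -a1 + N*Htilde + (1/k) l2
  have E1 : ∑ j, μ j * Ftilde1 k G m u j
      = -a1 + (N:ℝ) * Htilde k G m u + (1/k) * l2 := by
    have h : ∀ j, μ j * Ftilde1 k G m u j
        = -(μ j * G u j) + μ j * Htilde k G m u + (1/k) * (μ j * Real.log (m j)) := by
      intro j; rw [Ftilde1]; ring
    rw [Finset.sum_congr rfl (fun j _ => h j), Finset.sum_add_distrib, Finset.sum_add_distrib,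
      Finset.sum_neg_distrib, ← Finset.sum_mul, ← Finset.mul_sum, hμsum]
  -- stationarity: G v i = Htilde* + (1/k) log μ i
  have hGv : ∀ i, G v i = Htilde k G μ v + (1/k) * Real.log (μ i) := by
    intro i
    have := hstar1 i
    rw [Ftilde1] at this
    linarith
  have Eb1 : b1 = (N:ℝ) * Htilde k G μ v + (1/k) * l4 := by
    rw [hb1, Finset.sum_congr rfl (fun j _ => by rw [hGv j]), hl4]
    rw [Finset.sum_congr rfl (fun j (_ : j ∈ Finset.univ) =>
      (mul_add (μ j) (Htilde k G μ v) ((1/k) * Real.log (μ j))))]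
    rw [Finset.sum_add_distrib, ← Finset.sum_mul, hμsum]
    congr 1
    rw [Finset.mul_sum]
    apply Finset.sum_congr rfl
    intro j _
    ring
  have Eb2 : b2 = (N:ℝ) * Htilde k G μ v + (1/k) * l3 := by
    rw [hb2, Finset.sum_congr rfl (fun j _ => by rw [hGv j]), hl3]
    rw [Finset.sum_congr rfl (fun j (_ : j ∈ Finset.univ) =>
      (mul_add (m j) (Htilde k G μ v) ((1/k) * Real.log (μ j))))]
    rw [Finset.sum_add_distrib, ← Finset.sum_mul, hmsum]
    congr 1
    rw [Finset.mul_sum]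
    apply Finset.sum_congr rfl
    intro j _
    ring
  -- convexity bound 1 : S1 ≥ a2 - b2
  have hS1 : a2 - b2 ≤ ∑ i, m i * ((fderiv ℝ G u) (u - v) i) := by
    rw [ha2, hb2, ← Finset.sum_sub_distrib]
    apply Finset.sum_le_sum
    intro i _
    have hgi := grad_ineq (hGconv i) u v (comp_hasFDerivAt hGdiff u i)
    simp only [ContinuousLinearMap.coe_comp', Function.comp_apply,
      ContinuousLinearMap.proj_apply] at hgi
    have hneg : (fderiv ℝ G u) (v - u) i = -((fderiv ℝ G u) (u - v) i) := by
      have : v - u = -(u - v) := by abel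
      rw [this, map_neg]; simp
    rw [hneg] at hgi
    have : G u i - G v i ≤ (fderiv ℝ G u) (u - v) i := by linarith
    nlinarith [hm i, this, mul_le_mul_of_nonneg_left this (hm i).le]
  -- convexity bound 2 : a1 ≥ b1 + ∑ μ f'_v(u-v), and that sum is 0
  have hzero : ∑ j, μ j * ((fderiv ℝ G v) (u - v) j) = 0 := by
    rw [← swap_sum G μ v u v]
    simp [hstar2]
  have hS2 : b1 ≤ a1 := by
    have h : b1 + ∑ j, μ j * ((fderiv ℝ G v) (u - v) j) ≤ a1 := by
      rw [hb1, ha1, ← Finset.sum_add_distrib]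
      apply Finset.sum_le_sum
      intro j _
      have hgj := grad_ineq (hGconv j) v u (comp_hasFDerivAt hGdiff v j)
      simp only [ContinuousLinearMap.coe_comp', Function.comp_apply,
        ContinuousLinearMap.proj_apply] at hgj
      nlinarith [mul_le_mul_of_nonneg_left hgj (hμ j).le]
    linarith [hzero, h]
  -- entropy
  have EN : 0 ≤ l1 - l2 - l3 + l4 := by
    have h : l1 - l2 - l3 + l4 = ∑ j, (m j - μ j) * (Real.log (m j) - Real.log (μ j)) := by
      rw [hl1, hl2, hl3, hl4]
      rw [← Finset.sum_sub_distrib, ← Finset.sum_sub_distrib, ← Finset.sum_add_distrib]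
      apply Finset.sum_congr rfl
      intro j _; ring
    rw [h]
    apply Finset.sum_nonneg
    intro j _
    rcases le_total (μ j) (m j) with hle | hle
    · have := Real.log_le_log (hμ j) hle
      apply mul_nonneg <;> linarith
    · have := Real.log_le_log (hm j) hle
      nlinarith
  have hEk : 0 ≤ (1/k) * (l1 - l2 - l3 + l4) :=
    mul_nonneg (by positivity) EN
  rw [swap_sum G m u u v, E1]
  nlinarith [hS1, hS2, E2, Eb1, Eb2, hEk]

/-- the Lyapunov function
`φ̄(t) = (1/N)∑ⱼ m*ⱼ ln(m*ⱼ/mⱼ(t)) + (1/2N)∑ⱼ (uⱼ(t) − u*ⱼ)²`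
is nonnegative and nonincreasing along a positive, mass-one solution of the discrete
Hessian Riemannian flow, where `(M*,U*)` is a positive mass-one solution of `F̃ = 0`. -/
theorem discrete_HRF_lyapunov_nonneg_antitone
    (N : ℕ) (hN : 1 ≤ N) (k : ℝ) (hk : 0 < k)
    (G : (Fin N → ℝ) → (Fin N → ℝ))
    (hGdiff : Differentiable ℝ G)
    (hGconv : ∀ i : Fin N, ConvexOn ℝ Set.univ (fun U => G U i))
    (T : ℝ)
    (M U : ℝ → Fin N → ℝ)
    (hflowM : ∀ t ∈ Set.Ico (0 : ℝ) T, ∀ i,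
      HasDerivAt (fun s => M s i) (-(Fbar1 k G (M t) (U t) i)) t)
    (hflowU : ∀ t ∈ Set.Ico (0 : ℝ) T, ∀ i,
      HasDerivAt (fun s => U s i) (-(Ftilde2 G (M t) (U t) i)) t)
    (hMpos : ∀ t ∈ Set.Ico (0 : ℝ) T, ∀ i, 0 < M t i)
    (hmass : ∀ t ∈ Set.Ico (0 : ℝ) T, (1 / (N : ℝ)) * ∑ j, M t j = 1)
    (Mstar Ustar : Fin N → ℝ)
    (hMstarpos : ∀ j, 0 < Mstar j)
    (hstarmass : (1 / (N : ℝ)) * ∑ j, Mstar j = 1)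
    (hstar1 : ∀ i, Ftilde1 k G Mstar Ustar i = 0)
    (hstar2 : ∀ j, Ftilde2 G Mstar Ustar j = 0) :
    (∀ t ∈ Set.Ico (0 : ℝ) T,
      0 ≤ (1 / (N : ℝ)) * ∑ j, Mstar j * Real.log (Mstar j / M t j)
          + (1 / (2 * (N : ℝ))) * ∑ j, (U t j - Ustar j) ^ 2) ∧
    AntitoneOn (fun t =>
      (1 / (N : ℝ)) * ∑ j, Mstar j * Real.log (Mstar j / M t j)
        + (1 / (2 * (N : ℝ))) * ∑ j, (U t j - Ustar j) ^ 2)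
      (Set.Ico (0 : ℝ) T) := by
  have hNpos : (0:ℝ) < N := by exact_mod_cast hN
  have hNne : (N:ℝ) ≠ 0 := hNpos.ne'
  have hmsum : ∀ t ∈ Set.Ico (0:ℝ) T, ∑ j, M t j = N := by
    intro t ht
    have := hmass t ht
    field_simp at this
    linarith
  have hμsum : ∑ j, Mstar j = N := by
    field_simp at hstarmass
    linarith
  set φ : ℝ → ℝ := fun t =>
      (1 / (N : ℝ)) * ∑ j, Mstar j * Real.log (Mstar j / M t j)
        + (1 / (2 * (N : ℝ))) * ∑ j, (U t j - Ustar j) ^ 2 with hφ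
  -- derivative of φ
  have hderiv : ∀ t ∈ Set.Ico (0:ℝ) T,
      HasDerivAt φ ((1 / (N:ℝ)) * (∑ j, Mstar j * Ftilde1 k G (M t) (U t) j
        - ∑ j, (U t j - Ustar j) * Ftilde2 G (M t) (U t) j)) t := by
    intro t ht
    have h1 : ∀ j : Fin N, HasDerivAt (fun s => Mstar j * Real.log (Mstar j / M s j))
        (Mstar j * Ftilde1 k G (M t) (U t) j) t := by
      intro j
      have hMj := hflowM t ht j
      have hmne : M t j ≠ 0 := (hMpos t ht j).ne'
      have hμne : Mstar j ≠ 0 := (hMstarpos j).ne'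
      have hdiv : HasDerivAt (fun s => Mstar j / M s j)
          ((0 * M t j - Mstar j * (-(Fbar1 k G (M t) (U t) j))) / (M t j) ^ 2) t :=
        (hasDerivAt_const t (Mstar j)).div hMj hmne
      have hlog := hdiv.log (by positivity)
      have := hlog.const_mul (Mstar j)
      refine this.congr_deriv (Eq.symm ?_)
      rw [Fbar1]
      field_simp
      ring
    have h2 : ∀ j : Fin N, HasDerivAt (fun s => (U s j - Ustar j) ^ 2)
        ((2:ℕ) * (U t j - Ustar j) ^ 1 * (-(Ftilde2 G (M t) (U t) j))) t := by
      intro j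
      exact ((hflowU t ht j).sub_const (Ustar j)).pow 2
    have hsum1 : HasDerivAt (fun s => ∑ j, Mstar j * Real.log (Mstar j / M s j))
        (∑ j, Mstar j * Ftilde1 k G (M t) (U t) j) t :=
      HasDerivAt.fun_sum (fun j _ => h1 j)
    have hsum2 : HasDerivAt (fun s => ∑ j, (U s j - Ustar j) ^ 2)
        (∑ j, (2:ℕ) * (U t j - Ustar j) ^ 1 * (-(Ftilde2 G (M t) (U t) j))) t :=
      HasDerivAt.fun_sum (fun j _ => h2 j)
    have := (hsum1.const_mul (1 / (N:ℝ))).add (hsum2.const_mul (1 / (2 * (N:ℝ))))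
    refine this.congr_deriv (Eq.symm ?_)
    rw [mul_sub, Finset.mul_sum, Finset.mul_sum, Finset.mul_sum, sub_eq_add_neg,
      ← Finset.sum_neg_distrib]
    congr 1
    apply Finset.sum_congr rfl
    intro j _
    push_cast
    field_simp
  have hkey : ∀ t ∈ Set.Ico (0:ℝ) T,
      (∑ j, Mstar j * Ftilde1 k G (M t) (U t) j
        - ∑ j, (U t j - Ustar j) * Ftilde2 G (M t) (U t) j) ≤ 0 := fun t ht =>
    key_ineq hN hk G hGdiff hGconv (M t) (U t) Mstar Ustar
      (hMpos t ht) hMstarpos (hmsum t ht) hμsum hstar1 hstar2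
  constructor
  · -- nonnegativity
    intro t ht
    have hterm : ∀ j, Mstar j - M t j ≤ Mstar j * Real.log (Mstar j / M t j) := by
      intro j
      have hm := hMpos t ht j
      have hμ := hMstarpos j
      have hl := Real.log_le_sub_one_of_pos (div_pos hm hμ)
      rw [Real.log_div hm.ne' hμ.ne'] at hl
      rw [Real.log_div hμ.ne' hm.ne']
      have h2 := mul_le_mul_of_nonneg_left hl hμ.le
      have h3 : Mstar j * (M t j / Mstar j - 1) = M t j - Mstar j := by
        field_simp
      nlinarith
    have hsum := Finset.sum_le_sum (fun j (_ : j ∈ Finset.univ) => hterm j)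
    rw [Finset.sum_sub_distrib, hmsum t ht, hμsum] at hsum
    have hsq : (0:ℝ) ≤ ∑ j, (U t j - Ustar j) ^ 2 :=
      Finset.sum_nonneg fun j _ => sq_nonneg _
    have h1 : (0:ℝ) ≤ (1 / (N:ℝ)) * ∑ j, Mstar j * Real.log (Mstar j / M t j) := by
      apply mul_nonneg (by positivity)
      linarith
    have h2 : (0:ℝ) ≤ (1 / (2*(N:ℝ))) * ∑ j, (U t j - Ustar j) ^ 2 :=
      mul_nonneg (by positivity) hsq
    linarith
  · -- antitone
    apply antitoneOn_of_deriv_nonpos (convex_Ico 0 T)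
    · intro t ht
      exact ((hderiv t ht).continuousAt).continuousWithinAt
    · rw [interior_Ico]
      intro t ht
      exact ((hderiv t (Set.Ioo_subset_Ico_self ht)).differentiableAt).differentiableWithinAt
    · rw [interior_Ico]
      intro t ht
      have ht' := Set.Ioo_subset_Ico_self ht
      rw [(hderiv t ht').deriv]
      exact mul_nonpos_of_nonneg_of_nonpos (by positivity) (hkey t ht')
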